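/- Let Q be a finite connected graded quiver without oriented cycles of virtual degree 0, and P its ℤ-covering quiver. Then P has a right infinite path if and only if Q has an oriented cycle. -/
import Mathlib


/-- A graded quiver: a quiver with each arrow assigned an integer degree. -/
structure GradedQuiver where
  V : Type
  Arr : V → V → Type
  deg : ∀ {a b : V}, Arr a b → ℤ

namespace GradedQuiver

variable (Q : GradedQuiver)

/-- Paths: composable sequences of arrows (including trivial paths). -/
inductive Path : Q.V → Q.V → Type
  | nil (a : Q.V) : Path a a
  | cons {a b c : Q.V} (p : Path a b) (e : Q.Arr b c) : Path a c

/-- The length of a path. -/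
def Path.length {Q : GradedQuiver} : ∀ {a b : Q.V}, Q.Path a b → ℕ
  | _, _, .nil _ => 0
  | _, _, .cons p _ => p.length + 1

/-- The virtual degree of a path: the sum of `d(α) = 1 - |α|` over its arrows. -/
def Path.vdeg {Q : GradedQuiver} : ∀ {a b : Q.V}, Q.Path a b → ℤ
  | _, _, .nil _ => 0
  | _, _, .cons p e => p.vdeg + (1 - Q.deg e)

/-- The degree of a path: the sum of the degrees of its arrows. -/
def Path.degree {Q : GradedQuiver} : ∀ {a b : Q.V}, Q.Path a b → ℤ
  | _, _, .nil _ => 0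
  | _, _, .cons p e => p.degree + Q.deg e

/-- Walks: formal composites of arrows and formal inverses of arrows with
matching endpoints. -/
inductive Walk : Q.V → Q.V → Type
  | nil (a : Q.V) : Walk a a
  | consArr {a b c : Q.V} (w : Walk a b) (e : Q.Arr b c) : Walk a c
  | consInv {a b c : Q.V} (w : Walk a b) (e : Q.Arr c b) : Walk a c

/-- The virtual degree of a walk: `d(α) = 1 - |α|` for each arrow letter,
`-(1 - |α|)` for each inverse-arrow letter. -/
def Walk.vdeg {Q : GradedQuiver} : ∀ {a b : Q.V}, Q.Walk a b → ℤ
  | _, _, .nil _ => 0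
  | _, _, .consArr w e => w.vdeg + (1 - Q.deg e)
  | _, _, .consInv w e => w.vdeg - (1 - Q.deg e)

/-- `r` is the grading period of `Q`: it is `0` if every closed walk has virtual
degree `0`, and otherwise the minimal positive integer occurring as the virtual
degree of some closed walk. -/
def IsGradingPeriod (r : ℕ) : Prop :=
  (r = 0 ∧ ∀ (a : Q.V) (w : Q.Walk a a), w.vdeg = 0) ∨
  (0 < r ∧ (∃ (a : Q.V) (w : Q.Walk a a), w.vdeg = (r : ℤ)) ∧
    ∀ (a : Q.V) (w : Q.Walk a a), 0 < w.vdeg → (r : ℤ) ≤ w.vdeg)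

/-- `Q` is connected: any two vertices are joined by a walk. -/
def Connected : Prop := ∀ a b : Q.V, Nonempty (Q.Walk a b)

/-- The ℤ-covering quiver `P` of `Q`: vertices are pairs `(i, j)`, `i ∈ Q₀`,
`j ∈ ℤ`, and arrows `(α, j) : (s α, j) → (t α, j + d α)` with `d α = 1 - |α|`.
It is regarded as a graded quiver concentrated in degree `0`. -/
def Cover : GradedQuiver where
  V := Q.V × ℤ
  Arr := fun x y => { e : Q.Arr x.1 y.1 // y.2 = x.2 + (1 - Q.deg e) }
  deg := fun _ => 0

end GradedQuiver

namespace GradedQuiver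

variable {Q : GradedQuiver}

/-- Forward-oriented paths (cons at the front). -/
inductive FPath (Q : GradedQuiver) : Q.V → Q.V → Type
  | nil (a : Q.V) : FPath Q a a
  | cons {a b c : Q.V} (e : Q.Arr a b) (p : FPath Q b c) : FPath Q a c

def FPath.snoc : ∀ {a b c : Q.V}, Q.FPath a b → Q.Arr b c → Q.FPath a c
  | _, _, _, .nil _, e => .cons e (.nil _)
  | _, _, _, .cons e' p, e => .cons e' (p.snoc e)

def Path.toF : ∀ {a b : Q.V}, Q.Path a b → Q.FPath a b
  | _, _, .nil _ => .nil _
  | _, _, .cons p e => (Path.toF p).snoc e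

def FPath.length : ∀ {a b : Q.V}, Q.FPath a b → ℕ
  | _, _, .nil _ => 0
  | _, _, .cons _ p => p.length + 1

lemma FPath.snoc_length : ∀ {a b c : Q.V} (p : Q.FPath a b) (e : Q.Arr b c),
    (p.snoc e).length = p.length + 1
  | _, _, _, .nil _, _ => rfl
  | _, _, _, .cons e' p, e => by simp [FPath.snoc, FPath.length, FPath.snoc_length p e]

lemma Path.toF_length : ∀ {a b : Q.V} (p : Q.Path a b), p.toF.length = p.length
  | _, _, .nil _ => by simp [Path.toF, Path.length, FPath.length]
  | _, _, .cons p e => by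
      simp [Path.toF, Path.length, FPath.snoc_length, Path.toF_length p]

section Stream

variable (a b0 : Q.V) (E : Q.Arr a b0) (g : Q.FPath b0 a)

def next : (Σ c : Q.V, Q.FPath c a) → Σ b : Q.V, Σ c : Q.V, Q.Arr b c × Q.FPath c a
  | ⟨_, .nil _⟩ => ⟨a, b0, E, g⟩
  | ⟨c, .cons e q⟩ => ⟨c, _, e, q⟩

def st : ℕ → Σ b : Q.V, Σ c : Q.V, Q.Arr b c × Q.FPath c a
  | 0 => ⟨a, b0, E, g⟩
  | n + 1 => next a b0 E g ⟨_, (st n).2.2.2⟩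

lemma next_fst (s : Σ c : Q.V, Q.FPath c a) : (next a b0 E g s).1 = s.1 := by
  obtain ⟨c, q⟩ := s; cases q <;> rfl

def vert (n : ℕ) : Q.V := (st a b0 E g n).1

def arrs (n : ℕ) : Q.Arr (vert a b0 E g n) (vert a b0 E g (n + 1)) := by
  have h : vert a b0 E g (n + 1) = (st a b0 E g n).2.1 := next_fst a b0 E g _
  rw [vert, h]
  exact (st a b0 E g n).2.2.1

def jf : ℕ → ℤ
  | 0 => 0
  | n + 1 => jf n + (1 - Q.deg (arrs a b0 E g n))

end Stream

def build (u : ℕ → Q.V) (e : ∀ n, Q.Arr (u n) (u (n + 1))) (m : ℕ) :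
    ∀ k : ℕ, Q.Path (u m) (u (m + k))
  | 0 => .nil _
  | k + 1 => .cons (build u e m k) (e (m + k))

lemma build_length (u : ℕ → Q.V) (e : ∀ n, Q.Arr (u n) (u (n + 1))) (m : ℕ) :
    ∀ k : ℕ, (build u e m k).length = k
  | 0 => by simp [build, Path.length]
  | k + 1 => by simp [build, Path.length, build_length u e m k]

lemma cycle_of_path {a b : Q.V} (h : b = a) (p : Q.Path a b) (hp : 0 < p.length) :
    ∃ c : Q.V, ∃ q : Q.Path c c, 0 < q.length := by subst h; exact ⟨_, p, hp⟩

lemma exists_cycle (u : ℕ → Q.V) (e : ∀ n, Q.Arr (u n) (u (n + 1))) {m n : ℕ}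
    (h : m < n) (he : u m = u n) : ∃ a, ∃ p : Q.Path a a, 0 < p.length := by
  have hmk : m + (n - m) = n := by omega
  have hend : u (m + (n - m)) = u m := by rw [hmk, ← he]
  exact cycle_of_path hend (build u e m (n - m)) (by rw [build_length]; omega)

end GradedQuiver

/-- let `Q` be a finite connected graded quiver without oriented
cycles of virtual degree `0`, and `P` its ℤ-covering quiver. Then `P` has a right
infinite path (an infinite sequence of composable arrows `β₁, β₂, …` with
`t(βₙ) = s(βₙ₊₁)`) if and only if `Q` has an oriented cycle. -/
theorem stmt_17 (Q : GradedQuiver) (hV : Finite Q.V) (hA : ∀ a b : Q.V, Finite (Q.Arr a b))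
    (hconn : Q.Connected)
    (hcyc : ∀ (a : Q.V) (p : Q.Path a a), 0 < p.length → p.vdeg ≠ 0) :
    (∃ v : ℕ → Q.Cover.V, Nonempty (∀ n : ℕ, Q.Cover.Arr (v n) (v (n + 1)))) ↔
    (∃ (a : Q.V) (p : Q.Path a a), 0 < p.length) := by
  constructor
  · rintro ⟨v, ⟨f⟩⟩
    set u : ℕ → Q.V := fun n => (v n).1 with hu
    have e : ∀ n, Q.Arr (u n) (u (n + 1)) := fun n => (f n).1
    obtain ⟨m, n, hne, heq⟩ := Finite.exists_ne_map_eq_of_infinite u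
    rcases hne.lt_or_gt with h | h
    · exact GradedQuiver.exists_cycle u e h heq
    · exact GradedQuiver.exists_cycle u e h heq.symm
  · rintro ⟨a, p, hp⟩
    have hF : 0 < p.toF.length := by rw [GradedQuiver.Path.toF_length]; exact hp
    cases hFc : p.toF with
    | nil => rw [hFc] at hF; simp [GradedQuiver.FPath.length] at hF
    | cons E g =>
      exact ⟨fun n => (GradedQuiver.vert a _ E g n, GradedQuiver.jf a _ E g n),
        ⟨fun n => ⟨GradedQuiver.arrs a _ E g n, rfl⟩⟩⟩
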